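/- Let F : C → C' be a triangulated functor between pretriangulated categories. Let i : K → C and i' : K' → C' be inclusions of full triangulated subcategories admitting right adjoints R : C → K and R' : C' → K', and suppose F maps K into K', with F_K : K → K' the restriction (so F ∘ i ≅ i' ∘ F_K). Let L : C → D and L' : C' → D' be triangulated functors admitting fully faithful right adjoints j : D → C and j' : D' → C', let F̄ : D → D' be a triangulated functor equipped with a natural isomorphism L' ∘ F ≅ F̄ ∘ L, and assume K is the kernel of L and K' is the kernel of L' (objects sent to zero objects). If the upper square is right adjointable, i.e., the push–pull transformation F_K ∘ R → R' ∘ F is an isomorphism, then the lower square is right adjointable, i.e., the push–pull transformation F ∘ j → j' ∘ F̄ is an isomorphism. -/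

import Mathlib

/-!
STATEMENT 11: Let `F : C ⥤ C'` be a triangulated functor between pretriangulated categories.
Let `i : K ⥤ C` and `i' : K' ⥤ C'` be inclusions of full triangulated subcategories admitting
right adjoints `R : C ⥤ K` and `R' : C' ⥤ K'`, and suppose `F` maps `K` into `K'`, with
`F_K : K ⥤ K'` the restriction (so `F ∘ i ≅ i' ∘ F_K`).  Let `L : C ⥤ D` and `L' : C' ⥤ D'` be
triangulated functors admitting fully faithful right adjoints `j : D ⥤ C` and `j' : D' ⥤ C'`,
let `F̄ : D ⥤ D'` be a triangulated functor equipped with a natural isomorphism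
`L' ∘ F ≅ F̄ ∘ L`, and assume `K` is the kernel of `L` and `K'` is the kernel of `L'`.
If the upper square is right adjointable, i.e. the push–pull (Beck–Chevalley) transformation
`F_K ∘ R ⟶ R' ∘ F` is an isomorphism, then the lower square is right adjointable, i.e. the
push–pull transformation `F ∘ j ⟶ j' ∘ F̄` is an isomorphism.

Right adjointability is expressed componentwise: at each object the push–pull morphism
(obtained by transposing, along the relevant adjunction, the composite of the structural
isomorphism with the image of the counit) is an isomorphism.
-/

open CategoryTheory CategoryTheory.Limits CategoryTheory.Pretriangulated

namespace Statement11Aux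

open CategoryTheory CategoryTheory.Limits CategoryTheory.Pretriangulated

/-- An additive functor preserves zero objects. -/
lemma map_isZero {C D : Type*} [Category C] [Category D]
    [Preadditive C] [Preadditive D] (G : C ⥤ D) [G.Additive] {X : C}
    (h : IsZero X) : IsZero (G.obj X) := by
  rw [IsZero.iff_id_eq_zero, ← G.map_id, (IsZero.iff_id_eq_zero X).1 h, G.map_zero]

/-- If homs from the image of `i'` into `X` are subsingletons, the same holds
for `X⟦1⟧`, using the commutation of `i'` with shifts. -/
lemma subsingleton_shift {K' C' : Type*} [Category K'] [Category C']
    [HasShift K' ℤ] [HasShift C' ℤ]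
    (i' : K' ⥤ C') [i'.CommShift ℤ] (X : C')
    (h : ∀ B : K', Subsingleton (i'.obj B ⟶ X)) (B : K') :
    Subsingleton (i'.obj B ⟶ (X⟦(1 : ℤ)⟧)) := by
  constructor
  intro w₁ w₂
  apply (shiftFunctor C' (-1 : ℤ)).map_injective
  have key : ∀ w : i'.obj B ⟶ X⟦(1 : ℤ)⟧,
      (shiftFunctor C' (-1 : ℤ)).map w =
      (i'.commShiftIso (-1 : ℤ)).inv.app B ≫
        ((i'.commShiftIso (-1 : ℤ)).hom.app B ≫ (shiftFunctor C' (-1 : ℤ)).map w ≫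
          (shiftShiftNeg X (1 : ℤ)).hom) ≫ (shiftShiftNeg X (1 : ℤ)).inv := by
    intro w
    simp only [Category.assoc, Iso.hom_inv_id, Category.comp_id, Iso.inv_hom_id_app_assoc]
  rw [key w₁, key w₂,
    (h (B⟦(-1 : ℤ)⟧)).allEq
      ((i'.commShiftIso (-1 : ℤ)).hom.app B ≫ (shiftFunctor C' (-1 : ℤ)).map w₁ ≫
        (shiftShiftNeg X (1 : ℤ)).hom)
      ((i'.commShiftIso (-1 : ℤ)).hom.app B ≫ (shiftFunctor C' (-1 : ℤ)).map w₂ ≫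
        (shiftShiftNeg X (1 : ℤ)).hom)]

end Statement11Aux


theorem statement11 {K C K' C' D D' : Type*}
    [Category K] [Category C] [Category K'] [Category C'] [Category D] [Category D']
    [HasZeroObject K] [HasZeroObject C] [HasZeroObject K'] [HasZeroObject C']
    [HasZeroObject D] [HasZeroObject D']
    [Preadditive K] [Preadditive C] [Preadditive K'] [Preadditive C']
    [Preadditive D] [Preadditive D']
    [HasShift K ℤ] [HasShift C ℤ] [HasShift K' ℤ] [HasShift C' ℤ]
    [HasShift D ℤ] [HasShift D' ℤ]
    [∀ n : ℤ, (shiftFunctor K n).Additive] [∀ n : ℤ, (shiftFunctor C n).Additive]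
    [∀ n : ℤ, (shiftFunctor K' n).Additive] [∀ n : ℤ, (shiftFunctor C' n).Additive]
    [∀ n : ℤ, (shiftFunctor D n).Additive] [∀ n : ℤ, (shiftFunctor D' n).Additive]
    [Pretriangulated K] [Pretriangulated C] [Pretriangulated K'] [Pretriangulated C']
    [Pretriangulated D] [Pretriangulated D']
    -- `F` is a triangulated functor
    (F : C ⥤ C') [F.CommShift ℤ] [F.IsTriangulated]
    -- `i` and `i'` are inclusions of full triangulated subcategories, with right adjoints
    (i : K ⥤ C) [i.Full] [i.Faithful] [i.CommShift ℤ] [i.IsTriangulated]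
    (i' : K' ⥤ C') [i'.Full] [i'.Faithful] [i'.CommShift ℤ] [i'.IsTriangulated]
    (R : C ⥤ K) (adjiR : i ⊣ R) (R' : C' ⥤ K') (adjiR' : i' ⊣ R')
    -- `F` maps `K` into `K'`, with restriction `F_K`
    (F_K : K ⥤ K') (e : i ⋙ F ≅ F_K ⋙ i')
    -- `L` and `L'` are triangulated functors with fully faithful right adjoints `j`, `j'`
    (L : C ⥤ D) [L.CommShift ℤ] [L.IsTriangulated]
    (L' : C' ⥤ D') [L'.CommShift ℤ] [L'.IsTriangulated]
    (j : D ⥤ C) [j.Full] [j.Faithful] (adjLj : L ⊣ j)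
    (j' : D' ⥤ C') [j'.Full] [j'.Faithful] (adjLj' : L' ⊣ j')
    -- `F̄` is a triangulated functor with a natural isomorphism `L' ∘ F ≅ F̄ ∘ L`
    (Fbar : D ⥤ D') [Fbar.CommShift ℤ] [Fbar.IsTriangulated] (com : F ⋙ L' ≅ L ⋙ Fbar)
    -- `K` is the kernel of `L` and `K'` is the kernel of `L'`
    (hker : ∀ X : C, i.essImage X ↔ IsZero (L.obj X))
    (hker' : ∀ X' : C', i'.essImage X' ↔ IsZero (L'.obj X'))
    -- the upper square is right adjointable
    (hupper : ∀ X : C, IsIso ((adjiR'.homEquiv (F_K.obj (R.obj X)) (F.obj X))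
      (e.inv.app (R.obj X) ≫ F.map (adjiR.counit.app X)))) :
    -- then the lower square is right adjointable
    ∀ Y : D, IsIso ((adjLj'.homEquiv (F.obj (j.obj Y)) (Fbar.obj Y))
      (com.hom.app (j.obj Y) ≫ Fbar.map (adjLj.counit.app Y))) := by
  intro Y₀
  set θ := (adjLj'.homEquiv (F.obj (j.obj Y₀)) (Fbar.obj Y₀))
      (com.hom.app (j.obj Y₀) ≫ Fbar.map (adjLj.counit.app Y₀)) with hθdef
  -- Step A : `L'.map θ` is an isomorphism
  have hφ : IsIso (com.hom.app (j.obj Y₀) ≫ Fbar.map (adjLj.counit.app Y₀)) := by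
    infer_instance
  have hcomp : L'.map θ ≫ adjLj'.counit.app (Fbar.obj Y₀) =
      com.hom.app (j.obj Y₀) ≫ Fbar.map (adjLj.counit.app Y₀) := by
    rw [hθdef, Adjunction.homEquiv_unit, Functor.map_comp, Category.assoc]
    simp
  have hL : IsIso (L'.map θ) := by
    have : L'.map θ = (com.hom.app (j.obj Y₀) ≫ Fbar.map (adjLj.counit.app Y₀)) ≫
        inv (adjLj'.counit.app (Fbar.obj Y₀)) := by
      rw [← hcomp, Category.assoc, IsIso.hom_inv_id, Category.comp_id]
    rw [this]
    infer_instance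
  -- Step B : various vanishing statements
  have hLiA : ∀ A : K, IsZero (L.obj (i.obj A)) :=
    fun A => (hker _).1 ⟨A, ⟨Iso.refl _⟩⟩
  have hL'i'A : ∀ B : K', IsZero (L'.obj (i'.obj B)) :=
    fun B => (hker' _).1 ⟨B, ⟨Iso.refl _⟩⟩
  have hsub_j : ∀ (A : K) (W : D), Subsingleton (i.obj A ⟶ j.obj W) := by
    intro A W
    constructor
    intro f g
    apply (adjLj.homEquiv (i.obj A) W).symm.injective
    exact (hLiA A).eq_of_src _ _
  have hsub_j' : ∀ (B : K') (W : D'), Subsingleton (i'.obj B ⟶ j'.obj W) := by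
    intro B W
    constructor
    intro f g
    apply (adjLj'.homEquiv (i'.obj B) W).symm.injective
    exact (hL'i'A B).eq_of_src _ _
  have hRj : IsZero (R.obj (j.obj Y₀)) := by
    rw [IsZero.iff_id_eq_zero]
    apply (adjiR.homEquiv (R.obj (j.obj Y₀)) (j.obj Y₀)).symm.injective
    exact (hsub_j _ _).allEq _ _
  have hiRj : IsZero (i.obj (R.obj (j.obj Y₀))) := Statement11Aux.map_isZero i hRj
  have hFiRj : IsZero (F.obj (i.obj (R.obj (j.obj Y₀)))) := Statement11Aux.map_isZero F hiRj
  have hi'FK : IsZero (i'.obj (F_K.obj (R.obj (j.obj Y₀)))) :=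
    hFiRj.of_iso (e.app (R.obj (j.obj Y₀))).symm
  have hFK : IsZero (F_K.obj (R.obj (j.obj Y₀))) := by
    rw [IsZero.iff_id_eq_zero]
    apply i'.map_injective
    rw [CategoryTheory.Functor.map_id, CategoryTheory.Functor.map_zero]
    exact (IsZero.iff_id_eq_zero _).1 hi'FK
  have hR'F : IsZero (R'.obj (F.obj (j.obj Y₀))) := by
    have hiso := hupper (j.obj Y₀)
    exact hFK.of_iso (asIso ((adjiR'.homEquiv (F_K.obj (R.obj (j.obj Y₀)))
      (F.obj (j.obj Y₀))) (e.inv.app (R.obj (j.obj Y₀)) ≫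
        F.map (adjiR.counit.app (j.obj Y₀))))).symm
  have hPX : ∀ B : K', Subsingleton (i'.obj B ⟶ F.obj (j.obj Y₀)) := by
    intro B
    constructor
    intro f g
    apply (adjiR'.homEquiv B (F.obj (j.obj Y₀))).injective
    exact hR'F.eq_of_tgt _ _
  have hPX1 : ∀ B : K', Subsingleton (i'.obj B ⟶ (F.obj (j.obj Y₀))⟦(1 : ℤ)⟧) :=
    Statement11Aux.subsingleton_shift i' (F.obj (j.obj Y₀)) hPX
  -- Step C : complete `θ` to a distinguished triangle and kill its cone
  obtain ⟨Z, g, h, hT⟩ := Pretriangulated.distinguished_cocone_triangle θ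
  have hmap := L'.map_distinguished _ hT
  have hZL' : IsZero (L'.obj Z) := by
    have : IsIso ((L'.mapTriangle.obj (Triangle.mk θ g h)).mor₁) := hL
    exact Triangle.isZero₃_of_isIso₁ _ hmap this
  obtain ⟨A, ⟨eA⟩⟩ := (hker' Z).2 hZL'
  have h1 : eA.hom ≫ h = 0 := (hPX1 A).allEq _ _
  obtain ⟨v, hv⟩ := Triangle.coyoneda_exact₃ _ hT eA.hom h1
  have hv0 : v = 0 := (hsub_j' A (Fbar.obj Y₀)).allEq _ _
  have heA : eA.hom = 0 := by rw [hv, hv0]; exact zero_comp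
  have hZ : IsZero Z := by
    rw [IsZero.iff_id_eq_zero, ← eA.inv_hom_id, heA, comp_zero]
  exact (Triangle.isZero₃_iff_isIso₁ _ hT).1 hZ
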